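/- Let 1 < q < 2 and r > 0. There exists C_{q,r} > 0 depending only on q and r such that for every R > 0, wℓ_q(R) ∩ B^r_{2,∞}(R) ⊆ B_{q,r}(C_{q,r} R); in particular, since L_q(R) ⊆ wℓ_q(R), also L_q(R) ∩ B^r_{2,∞}(R) ⊆ B_{q,r}(C_{q,r} R). -/

import Mathlib

open MeasureTheory Real

noncomputable section

/-- Membership in the linear span of the truncated dictionary `{φ 0, …, φ (p-1)}`
(representing `{φ_1, …, φ_p}`). -/
def L1set {H : Type*} [AddCommGroup H] [Module ℝ H] (φ : ℕ → H) (p : ℕ) : Set H :=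
  {h | ∃ θ : Fin p → ℝ, h = ∑ j, θ j • φ (j : ℕ)}

/-- The ℓ¹ norm with respect to the truncated dictionary. -/
def l1norm {H : Type*} [AddCommGroup H] [Module ℝ H] (φ : ℕ → H) (p : ℕ) (h : H) : ℝ :=
  sInf {s : ℝ | ∃ θ : Fin p → ℝ, h = ∑ j, θ j • φ (j : ℕ) ∧ s = ∑ j, |θ j|}

/-- Membership in the space `L_{1,r}`. -/
def memL1r {H : Type*} [NormedAddCommGroup H] [InnerProductSpace ℝ H]
    (φ : ℕ → H) (r : ℝ) (g : H) : Prop :=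
  ∃ C : ℝ, 0 < C ∧ ∀ p : ℕ, 1 ≤ p →
    ∃ gp ∈ L1set φ p, l1norm φ p gp ≤ C ∧ ‖g - gp‖ ≤ C * (p : ℝ) ^ (-r)

/-- The norm of the space `L_{1,r}` (the smallest admissible constant `C`). -/
def l1rnorm {H : Type*} [NormedAddCommGroup H] [InnerProductSpace ℝ H]
    (φ : ℕ → H) (r : ℝ) (g : H) : ℝ :=
  sInf {C : ℝ | 0 < C ∧ ∀ p : ℕ, 1 ≤ p →
    ∃ gp ∈ L1set φ p, l1norm φ p gp ≤ C ∧ ‖g - gp‖ ≤ C * (p : ℝ) ^ (-r)}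

/-- Membership in the interpolation space `B_{q,r}(R)`. -/
def memBqr {H : Type*} [NormedAddCommGroup H] [InnerProductSpace ℝ H]
    (φ : ℕ → H) (q r R : ℝ) (g : H) : Prop :=
  ∀ δ : ℝ, 0 < δ →
    (⨅ h : {h : H // memL1r φ r h}, (‖g - (h : H)‖ + δ * l1rnorm φ r (h : H))) ≤
      R * δ ^ (2 * (1 / q - 1 / 2))

/-- Membership in the strong `L_q(R)` ball, in terms of the coefficients on the
orthonormal basis `φ`. -/
def inLq {H : Type*} [NormedAddCommGroup H] [InnerProductSpace ℝ H]
    (φ : ℕ → H) (q R : ℝ) (g : H) : Prop :=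
  Summable (fun j => |(inner ℝ (φ j) g : ℝ)| ^ q) ∧
    ∑' j : ℕ, |(inner ℝ (φ j) g : ℝ)| ^ q ≤ R ^ q

/-- Membership in the weak `wℓ_q(R)` ball, in terms of the coefficients on the
orthonormal basis `φ`. -/
def inwlq {H : Type*} [NormedAddCommGroup H] [InnerProductSpace ℝ H]
    (φ : ℕ → H) (q R : ℝ) (g : H) : Prop :=
  ∀ η : ℝ, 0 < η → {j : ℕ | η < |(inner ℝ (φ j) g : ℝ)|}.Finite ∧
    η ^ q * ({j : ℕ | η < |(inner ℝ (φ j) g : ℝ)|}.ncard : ℝ) ≤ R ^ q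

/-- Membership in the Besov ball `B^r_{2,∞}(R)`, in terms of the coefficients on the
orthonormal basis `φ` (here `φ j` stands for `φ_{j+1}`, `j ∈ ℕ`). -/
def inBesov {H : Type*} [NormedAddCommGroup H] [InnerProductSpace ℝ H]
    (φ : ℕ → H) (r R : ℝ) (g : H) : Prop :=
  ∀ J : ℕ, ((J : ℝ) + 1) ^ (2 * r) *
      (∑' j : ℕ, if J ≤ j then (inner ℝ (φ j) g : ℝ) ^ 2 else 0) ≤ R ^ 2

lemma geom_tail_le {x : ℝ} (h0 : 0 ≤ x) (h1 : x < 1) (K : ℕ) :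
    ∑ k ∈ Finset.range K, x ^ k ≤ (1 - x)⁻¹ := by
  rw [geom_sum_eq h1.ne K, div_le_iff_of_neg (by linarith : x - 1 < 0)]
  have h2 : (0:ℝ) < 1 - x := by linarith
  have : (1 - x)⁻¹ * (x - 1) = -1 := by field_simp; ring
  rw [this]
  nlinarith [pow_nonneg h0 K]

lemma two_rpow_lin (a b : ℝ) (m : ℕ) :
    (2:ℝ) ^ (a * m + b) = 2 ^ b * ((2:ℝ) ^ a) ^ m := by
  rw [Real.rpow_add two_pos, ← Real.rpow_natCast ((2:ℝ) ^ a) m,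
    ← Real.rpow_mul (by norm_num : (0:ℝ) ≤ 2), mul_comm]

lemma dyadic_sum_le {a : ℕ → ℝ} {q R η M : ℝ} (hq1 : 1 < q) (hR : 0 < R) (hη : 0 < η)
    (hM : ∀ j, a j ≤ M)
    (hcount : ∀ t : ℝ, 0 < t → ∀ s : Finset ℕ, (∀ j ∈ s, t < a j) →
      (s.card : ℝ) ≤ R ^ q * t ^ (-q))
    (s : Finset ℕ) (hs : ∀ j ∈ s, η < a j) :
    ∑ j ∈ s, a j ≤ (2:ℝ) ^ (q + 1) * (1 - (2:ℝ) ^ (1 - q))⁻¹ * (R ^ q * η ^ (1 - q)) := by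
  have hx0 : (0:ℝ) < (2:ℝ) ^ (1 - q) := Real.rpow_pos_of_pos two_pos _
  have hx1 : (2:ℝ) ^ (1 - q) < 1 :=
    Real.rpow_lt_one_of_one_lt_of_neg (by norm_num) (by linarith)
  set k : ℕ → ℕ := fun j => Nat.log 2 ⌊a j / η⌋₊ with hk
  set K : ℕ := Nat.log 2 ⌊M / η⌋₊ + 1 with hK
  have hmaps : ∀ j ∈ s, k j ∈ Finset.range K := by
    intro j hj
    rw [Finset.mem_range, hK]
    have h1 : a j / η ≤ M / η := by gcongr; exact hM j
    exact Nat.lt_succ_of_le (Nat.log_mono_right (Nat.floor_le_floor h1))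
  rw [← Finset.sum_fiberwise_of_maps_to hmaps (fun j => a j)]
  have hfiber : ∀ m ∈ Finset.range K,
      ∑ j ∈ s.filter (fun j => k j = m), a j
        ≤ (2:ℝ) ^ (q+1) * (R ^ q * η ^ (1-q)) * ((2:ℝ) ^ (1-q)) ^ m := by
    intro m _
    set t := s.filter (fun j => k j = m) with ht
    have hmem : ∀ j ∈ t, (2:ℝ) ^ (m:ℝ) * η ≤ a j ∧ a j ≤ (2:ℝ) ^ ((m:ℝ)+1) * η := by
      intro j hj
      rw [ht, Finset.mem_filter] at hj
      obtain ⟨hjs, hjm⟩ := hj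
      have hηa : η < a j := hs j hjs
      have haj : 0 < a j := lt_trans hη hηa
      have hr1 : (1:ℝ) ≤ a j / η := (one_le_div hη).mpr hηa.le
      have hfl1 : 1 ≤ ⌊a j / η⌋₊ := Nat.le_floor (by exact_mod_cast hr1)
      have hne : ⌊a j / η⌋₊ ≠ 0 := by omega
      have hlow : (2:ℕ) ^ (k j) ≤ ⌊a j / η⌋₊ := Nat.pow_log_le_self 2 hne
      have hup : ⌊a j / η⌋₊ < 2 ^ (k j + 1) := Nat.lt_pow_succ_log_self (by norm_num) _
      rw [hjm] at hlow hup
      constructor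
      · have h2 : ((2:ℕ) ^ m : ℝ) ≤ a j / η :=
          le_trans (by exact_mod_cast hlow) (Nat.floor_le (by positivity))
        have h3 : (2:ℝ) ^ (m:ℝ) = ((2:ℕ) ^ m : ℝ) := by
          push_cast; exact Real.rpow_natCast 2 m
        rw [h3]
        exact (le_div_iff₀ hη).mp h2
      · have h2 : a j / η < ((2:ℕ) ^ (m+1) : ℝ) :=
          lt_of_lt_of_le (Nat.lt_floor_add_one _) (by exact_mod_cast Nat.succ_le_of_lt hup)
        have h3 : (2:ℝ) ^ ((m:ℝ)+1) = ((2:ℕ) ^ (m+1) : ℝ) := by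
          push_cast
          rw [← Real.rpow_natCast 2 (m+1)]
          push_cast
          ring_nf
        rw [h3]
        exact le_of_lt ((div_lt_iff₀ hη).mp h2)
    have hcard : (t.card : ℝ) ≤ R^q * ((2:ℝ)^((m:ℝ)-1) * η) ^ (-q) := by
      apply hcount _ (by positivity) t
      intro j hj
      have h1 := (hmem j hj).1
      have h2 : (2:ℝ)^((m:ℝ)-1) * η < (2:ℝ)^(m:ℝ) * η := by
        apply mul_lt_mul_of_pos_right _ hη
        exact (Real.rpow_lt_rpow_left_iff (by norm_num)).mpr (by linarith)
      linarith
    have hsum : ∑ j ∈ t, a j ≤ (t.card : ℝ) * ((2:ℝ)^((m:ℝ)+1) * η) := by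
      have := Finset.sum_le_card_nsmul t a ((2:ℝ)^((m:ℝ)+1) * η) (fun j hj => (hmem j hj).2)
      simpa [nsmul_eq_mul] using this
  -- algebra
    have e1 : ((2:ℝ)^((m:ℝ)-1) * η) ^ (-q) = (2:ℝ)^(((m:ℝ)-1)*(-q)) * η^(-q) := by
      rw [Real.mul_rpow (le_of_lt (Real.rpow_pos_of_pos two_pos _)) hη.le,
        ← Real.rpow_mul (by norm_num : (0:ℝ) ≤ 2)]
    have e4 : η^(-q) * η = η^(1-q) := by
      have h := (Real.rpow_add hη (-q) 1).symm
      rw [Real.rpow_one] at h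
      rw [h]
      congr 1
      ring
    have e2 : (2:ℝ)^(q+1) * ((2:ℝ)^(1-q))^m = (2:ℝ)^((1-q)*m + (q+1)) := by
      rw [two_rpow_lin (1-q) (q+1) m, mul_comm]
    calc ∑ j ∈ t, a j ≤ (t.card:ℝ) * ((2:ℝ)^((m:ℝ)+1) * η) := hsum
      _ ≤ R^q * ((2:ℝ)^((m:ℝ)-1) * η)^(-q) * ((2:ℝ)^((m:ℝ)+1) * η) :=
          mul_le_mul_of_nonneg_right hcard (by positivity)
      _ = R^q * ((2:ℝ)^(((m:ℝ)-1)*(-q)) * (2:ℝ)^((m:ℝ)+1)) * (η^(-q) * η) := by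
          rw [e1]; ring
      _ = R^q * (2:ℝ)^((1-q)*m + (q+1)) * η^(1-q) := by
          rw [← Real.rpow_add two_pos, e4,
            show ((m:ℝ)-1)*(-q) + ((m:ℝ)+1) = (1-q)*m + (q+1) from by ring]
      _ = (2:ℝ)^(q+1) * (R^q * η^(1-q)) * ((2:ℝ)^(1-q))^m := by
          rw [show (2:ℝ)^(q+1) * (R^q * η^(1-q)) * ((2:ℝ)^(1-q))^m
              = ((2:ℝ)^(q+1) * ((2:ℝ)^(1-q))^m) * (R^q * η^(1-q)) from by ring, e2]
          ring
  calc ∑ m ∈ Finset.range K, ∑ j ∈ s.filter (fun j => k j = m), a j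
      ≤ ∑ m ∈ Finset.range K, (2:ℝ)^(q+1) * (R^q * η^(1-q)) * ((2:ℝ)^(1-q))^m :=
        Finset.sum_le_sum hfiber
    _ = (2:ℝ)^(q+1) * (R^q * η^(1-q)) * ∑ m ∈ Finset.range K, ((2:ℝ)^(1-q))^m := by
        rw [Finset.mul_sum]
    _ ≤ (2:ℝ)^(q+1) * (R^q * η^(1-q)) * (1 - (2:ℝ)^(1-q))⁻¹ :=
        mul_le_mul_of_nonneg_left (geom_tail_le hx0.le hx1 K) (by positivity)
    _ = (2:ℝ)^(q+1) * (1 - (2:ℝ)^(1-q))⁻¹ * (R^q * η^(1-q)) := by ring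

lemma dyadic_sq_le {a : ℕ → ℝ} {q R η : ℝ} (hq2 : q < 2) (hq0 : 0 < q) (hR : 0 < R) (hη : 0 < η)
    (hcount : ∀ t : ℝ, 0 < t → ∀ s : Finset ℕ, (∀ j ∈ s, t < a j) →
      (s.card : ℝ) ≤ R ^ q * t ^ (-q))
    (s : Finset ℕ) (hs : ∀ j ∈ s, 0 < a j ∧ a j ≤ η) :
    ∑ j ∈ s, (a j)^2 ≤ (2:ℝ) ^ q * (1 - (2:ℝ) ^ (q - 2))⁻¹ * (R ^ q * η ^ (2 - q)) := by
  have hx0 : (0:ℝ) < (2:ℝ) ^ (q - 2) := Real.rpow_pos_of_pos two_pos _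
  have hx1 : (2:ℝ) ^ (q - 2) < 1 :=
    Real.rpow_lt_one_of_one_lt_of_neg (by norm_num) (by linarith)
  set k : ℕ → ℕ := fun j => Nat.log 2 ⌊η / a j⌋₊ with hk
  set K : ℕ := s.sup k + 1 with hK
  have hmaps : ∀ j ∈ s, k j ∈ Finset.range K := by
    intro j hj
    rw [Finset.mem_range, hK]
    exact Nat.lt_succ_of_le (Finset.le_sup hj)
  rw [← Finset.sum_fiberwise_of_maps_to hmaps (fun j => (a j)^2)]
  have hfiber : ∀ m ∈ Finset.range K,
      ∑ j ∈ s.filter (fun j => k j = m), (a j)^2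
        ≤ (2:ℝ) ^ q * (R ^ q * η ^ (2-q)) * ((2:ℝ) ^ (q-2)) ^ m := by
    intro m _
    set t := s.filter (fun j => k j = m) with ht
    have hmem : ∀ j ∈ t, (2:ℝ) ^ (-(m:ℝ)-1) * η < a j ∧ a j ≤ (2:ℝ) ^ (-(m:ℝ)) * η := by
      intro j hj
      rw [ht, Finset.mem_filter] at hj
      obtain ⟨hjs, hjm⟩ := hj
      obtain ⟨haj, hajη⟩ := hs j hjs
      have hr1 : (1:ℝ) ≤ η / a j := (one_le_div haj).mpr hajη
      have hfl1 : 1 ≤ ⌊η / a j⌋₊ := Nat.le_floor (by exact_mod_cast hr1)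
      have hne : ⌊η / a j⌋₊ ≠ 0 := by omega
      have hlow : (2:ℕ) ^ (k j) ≤ ⌊η / a j⌋₊ := Nat.pow_log_le_self 2 hne
      have hup : ⌊η / a j⌋₊ < 2 ^ (k j + 1) := Nat.lt_pow_succ_log_self (by norm_num) _
      rw [hjm] at hlow hup
      have hm1 : (2:ℝ) ^ (m:ℝ) = ((2:ℕ) ^ m : ℝ) := by
        push_cast; exact Real.rpow_natCast 2 m
      have hm2 : (2:ℝ) ^ ((m:ℝ)+1) = ((2:ℕ) ^ (m+1) : ℝ) := by
        push_cast
        rw [← Real.rpow_natCast 2 (m+1)]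
        push_cast
        ring_nf
      have hpow : (0:ℝ) < (2:ℝ) ^ (m:ℝ) := Real.rpow_pos_of_pos two_pos _
      have hpow2 : (0:ℝ) < (2:ℝ) ^ ((m:ℝ)+1) := Real.rpow_pos_of_pos two_pos _
      constructor
      · -- lower bound
        have h2 : η / a j < ((2:ℕ) ^ (m+1) : ℝ) :=
          lt_of_lt_of_le (Nat.lt_floor_add_one _) (by exact_mod_cast Nat.succ_le_of_lt hup)
        have h3 : η < (2:ℝ) ^ ((m:ℝ)+1) * a j := by
          rw [hm2]; exact (div_lt_iff₀ haj).mp h2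
        have h4 : (2:ℝ)^(-(m:ℝ)-1) * η < (2:ℝ)^(-(m:ℝ)-1) * ((2:ℝ)^((m:ℝ)+1) * a j) :=
          mul_lt_mul_of_pos_left h3 (Real.rpow_pos_of_pos two_pos _)
        have h5 : (2:ℝ)^(-(m:ℝ)-1) * (2:ℝ)^((m:ℝ)+1) = 1 := by
          rw [← Real.rpow_add two_pos]; norm_num
        rw [← mul_assoc, h5, one_mul] at h4
        exact h4
      · -- upper bound
        have h2 : ((2:ℕ) ^ m : ℝ) ≤ η / a j :=
          le_trans (by exact_mod_cast hlow) (Nat.floor_le (by positivity))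
        have h3 : (2:ℝ) ^ (m:ℝ) * a j ≤ η := by
          rw [hm1]; exact (le_div_iff₀ haj).mp h2
        have h4 : (2:ℝ)^(-(m:ℝ)) * ((2:ℝ)^(m:ℝ) * a j) ≤ (2:ℝ)^(-(m:ℝ)) * η :=
          mul_le_mul_of_nonneg_left h3 (Real.rpow_pos_of_pos two_pos _).le
        have h5 : (2:ℝ)^(-(m:ℝ)) * (2:ℝ)^(m:ℝ) = 1 := by
          rw [← Real.rpow_add two_pos]; norm_num
        rw [← mul_assoc, h5, one_mul] at h4
        exact h4
    have hcard : (t.card : ℝ) ≤ R^q * ((2:ℝ)^(-(m:ℝ)-1) * η) ^ (-q) :=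
      hcount _ (by positivity) t (fun j hj => (hmem j hj).1)
    have hsum : ∑ j ∈ t, (a j)^2 ≤ (t.card : ℝ) * ((2:ℝ)^(-(m:ℝ)) * η)^2 := by
      have := Finset.sum_le_card_nsmul t (fun j => (a j)^2) (((2:ℝ)^(-(m:ℝ)) * η)^2)
        (fun j hj => pow_le_pow_left₀ (hs j (Finset.mem_filter.mp (ht ▸ hj)).1).1.le
          (hmem j hj).2 2)
      simpa [nsmul_eq_mul] using this
    have e1 : ((2:ℝ)^(-(m:ℝ)-1) * η) ^ (-q) = (2:ℝ)^((-(m:ℝ)-1)*(-q)) * η^(-q) := by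
      rw [Real.mul_rpow (le_of_lt (Real.rpow_pos_of_pos two_pos _)) hη.le,
        ← Real.rpow_mul (by norm_num : (0:ℝ) ≤ 2)]
    have ecap : ((2:ℝ)^(-(m:ℝ)) * η)^2 = (2:ℝ)^(-(m:ℝ)*2) * η^2 := by
      rw [mul_pow, ← Real.rpow_natCast ((2:ℝ)^(-(m:ℝ))) 2,
        ← Real.rpow_mul (by norm_num : (0:ℝ) ≤ 2)]
      norm_num
    have e4 : η^(-q) * η^2 = η^(2-q) := by
      have h2 : (η:ℝ)^2 = η^((2:ℕ):ℝ) := (Real.rpow_natCast η 2).symm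
      rw [h2, ← Real.rpow_add hη]
      congr 1
      push_cast
      ring
    have e2 : (2:ℝ)^q * ((2:ℝ)^(q-2))^m = (2:ℝ)^((q-2)*m + q) := by
      rw [two_rpow_lin (q-2) q m, mul_comm]
    calc ∑ j ∈ t, (a j)^2 ≤ (t.card:ℝ) * ((2:ℝ)^(-(m:ℝ)) * η)^2 := hsum
      _ ≤ R^q * ((2:ℝ)^(-(m:ℝ)-1) * η)^(-q) * ((2:ℝ)^(-(m:ℝ)) * η)^2 :=
          mul_le_mul_of_nonneg_right hcard (by positivity)
      _ = R^q * ((2:ℝ)^((-(m:ℝ)-1)*(-q)) * (2:ℝ)^(-(m:ℝ)*2)) * (η^(-q) * η^2) := by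
          rw [e1, ecap]; ring
      _ = R^q * (2:ℝ)^((q-2)*m + q) * η^(2-q) := by
          rw [← Real.rpow_add two_pos, e4,
            show (-(m:ℝ)-1)*(-q) + (-(m:ℝ)*2) = (q-2)*m + q from by ring]
      _ = (2:ℝ)^q * (R^q * η^(2-q)) * ((2:ℝ)^(q-2))^m := by
          rw [show (2:ℝ)^q * (R^q * η^(2-q)) * ((2:ℝ)^(q-2))^m
              = ((2:ℝ)^q * ((2:ℝ)^(q-2))^m) * (R^q * η^(2-q)) from by ring, e2]
          ring
  calc ∑ m ∈ Finset.range K, ∑ j ∈ s.filter (fun j => k j = m), (a j)^2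
      ≤ ∑ m ∈ Finset.range K, (2:ℝ)^q * (R^q * η^(2-q)) * ((2:ℝ)^(q-2))^m :=
        Finset.sum_le_sum hfiber
    _ = (2:ℝ)^q * (R^q * η^(2-q)) * ∑ m ∈ Finset.range K, ((2:ℝ)^(q-2))^m := by
        rw [Finset.mul_sum]
    _ ≤ (2:ℝ)^q * (R^q * η^(2-q)) * (1 - (2:ℝ)^(q-2))⁻¹ :=
        mul_le_mul_of_nonneg_left (geom_tail_le hx0.le hx1 K) (by positivity)
    _ = (2:ℝ)^q * (1 - (2:ℝ)^(q-2))⁻¹ * (R^q * η^(2-q)) := by ring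


section Aux
variable {H : Type} [NormedAddCommGroup H] [InnerProductSpace ℝ H]

lemma l1norm_le (φ : ℕ → H) (p : ℕ) (θ : Fin p → ℝ) :
    l1norm φ p (∑ j, θ j • φ (j : ℕ)) ≤ ∑ j, |θ j| := by
  apply csInf_le
  · refine ⟨0, ?_⟩
    rintro s ⟨θ', _, rfl⟩
    positivity
  · exact ⟨θ, rfl, rfl⟩

lemma l1rnorm_nonneg (φ : ℕ → H) (r : ℝ) (h : H) : 0 ≤ l1rnorm φ r h :=
  Real.sInf_nonneg (fun _ hC => hC.1.le)

lemma zero_mem_L1set (φ : ℕ → H) (p : ℕ) : (0 : H) ∈ L1set φ p :=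
  ⟨0, by simp⟩

lemma l1norm_zero_le (φ : ℕ → H) (p : ℕ) : l1norm φ p 0 ≤ 0 := by
  simpa using l1norm_le φ p 0

lemma memL1r_zero (φ : ℕ → H) (r : ℝ) : memL1r φ r (0 : H) := by
  refine ⟨1, one_pos, fun p hp => ⟨0, zero_mem_L1set φ p, by linarith [l1norm_zero_le φ p], ?_⟩⟩
  have : (0:ℝ) ≤ 1 * (p:ℝ) ^ (-r) :=
    mul_nonneg zero_le_one (Real.rpow_nonneg (by positivity) _)
  simpa using this

lemma l1rnorm_zero (φ : ℕ → H) (r : ℝ) : l1rnorm φ r (0 : H) = 0 := by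
  have hset : {C : ℝ | 0 < C ∧ ∀ p : ℕ, 1 ≤ p →
      ∃ gp ∈ L1set φ p, l1norm φ p gp ≤ C ∧ ‖(0:H) - gp‖ ≤ C * (p : ℝ) ^ (-r)}
      = Set.Ioi 0 := by
    ext C
    simp only [Set.mem_setOf_eq, Set.mem_Ioi]
    constructor
    · exact fun h => h.1
    · intro hC
      refine ⟨hC, fun p hp => ⟨0, zero_mem_L1set φ p,
        le_trans (l1norm_zero_le φ p) hC.le, ?_⟩⟩
      have : (0:ℝ) ≤ C * (p:ℝ) ^ (-r) :=
        mul_nonneg hC.le (Real.rpow_nonneg (by positivity) _)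
      simpa using this
  rw [l1rnorm, hset, csInf_Ioi]

end Aux



section Main
variable {H : Type} [NormedAddCommGroup H] [InnerProductSpace ℝ H] {φ : ℕ → H}

variable {H : Type} [NormedAddCommGroup H] [InnerProductSpace ℝ H] {φ : ℕ → H}

lemma sq_summable (hφ : Orthonormal ℝ φ) (x : H) :
    Summable (fun i => (inner ℝ (φ i) x : ℝ) ^ 2) := by
  have h := hφ.inner_products_summable (x := x) (𝕜 := ℝ)
  convert h using 2 with i
  rw [Real.norm_eq_abs, sq_abs]

lemma inner_finsum (hφ : Orthonormal ℝ φ) (s : Finset ℕ) (c : ℕ → ℝ) (i : ℕ) :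
    (inner ℝ (φ i) (∑ j ∈ s, c j • φ j) : ℝ) = if i ∈ s then c i else 0 := by
  rw [inner_sum]
  simp only [real_inner_smul_right, orthonormal_iff_ite.mp hφ, mul_ite, mul_one, mul_zero]
  exact Finset.sum_ite_eq s i c

lemma norm_partial_sq (hφ : Orthonormal ℝ φ) (c : ℕ → ℝ) (s : Finset ℕ) :
    ‖∑ j ∈ s, c j • φ j‖ ^ 2 = ∑ j ∈ s, (c j) ^ 2 := by
  rw [← real_inner_self_eq_norm_sq, sum_inner]
  apply Finset.sum_congr rfl
  intro j hj
  rw [real_inner_smul_left, inner_finsum hφ, if_pos hj, sq]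

/-- key finite expansion: for any coefficients `d`,
`‖g‖² - ∑_{i∈s} θᵢ² ≤ ‖g - ∑ dᵢ φᵢ‖²` with equality iff d = θ. -/
lemma sub_partial_ge (hφ : Orthonormal ℝ φ) (g : H) (s : Finset ℕ) (d : ℕ → ℝ) :
    ‖g‖ ^ 2 - ∑ i ∈ s, (inner ℝ (φ i) g : ℝ) ^ 2 ≤ ‖g - ∑ i ∈ s, d i • φ i‖ ^ 2 := by
  set θ : ℕ → ℝ := fun i => (inner ℝ (φ i) g : ℝ) with hθ
  have hexp : ‖g - ∑ i ∈ s, d i • φ i‖ ^ 2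
      = ‖g‖ ^ 2 - 2 * ∑ i ∈ s, d i * θ i + ∑ i ∈ s, (d i) ^ 2 := by
    have hip : (inner ℝ g (∑ i ∈ s, d i • φ i) : ℝ) = ∑ i ∈ s, d i * θ i := by
      rw [inner_sum]
      exact Finset.sum_congr rfl (fun i _ => by rw [real_inner_smul_right, real_inner_comm])
    rw [@norm_sub_sq_real, norm_partial_sq hφ, hip]
  have hpos : (0:ℝ) ≤ ∑ i ∈ s, (d i - θ i) ^ 2 :=
    Finset.sum_nonneg (fun i _ => sq_nonneg _)
  have hexp2 : ∑ i ∈ s, (d i - θ i) ^ 2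
      = ∑ i ∈ s, (d i) ^ 2 - 2 * ∑ i ∈ s, (d i * θ i) + ∑ i ∈ s, (θ i) ^ 2 := by
    rw [Finset.mul_sum, ← Finset.sum_sub_distrib, ← Finset.sum_add_distrib]
    exact Finset.sum_congr rfl (fun i _ => by ring)
  linarith [hexp, hexp2, hpos]

lemma exists_partial_sq (hφ : Orthonormal ℝ φ)
    (hsp : (Submodule.span ℝ (Set.range φ)).topologicalClosure = ⊤) (g : H) :
    ∀ ε : ℝ, 0 < ε → ∃ s : Finset ℕ, ∃ d : ℕ → ℝ, ‖g - ∑ i ∈ s, d i • φ i‖ ^ 2 < ε := by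
  intro ε hε
  have hd : Dense ((Submodule.span ℝ (Set.range φ) : Submodule ℝ H) : Set H) := by
    rw [Submodule.dense_iff_topologicalClosure_eq_top]
    exact hsp
  obtain ⟨y, hy, hdist⟩ := hd.exists_dist_lt g (Real.sqrt_pos.mpr hε)
  obtain ⟨c, hc⟩ := (Finsupp.mem_span_range_iff_exists_finsupp).mp hy
  refine ⟨c.support, c, ?_⟩
  have hyc : y = ∑ i ∈ c.support, c i • φ i := by
    rw [← hc]; rfl
  rw [← hyc]
  have h1 : ‖g - y‖ < Real.sqrt ε := by rwa [← dist_eq_norm]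
  have h2 : ‖g - y‖ ^ 2 < (Real.sqrt ε) ^ 2 := by
    apply pow_lt_pow_left₀ h1 (norm_nonneg _)
    norm_num
  rwa [Real.sq_sqrt hε.le] at h2

lemma parseval (hφ : Orthonormal ℝ φ)
    (hsp : (Submodule.span ℝ (Set.range φ)).topologicalClosure = ⊤) (g : H) :
    ‖g‖ ^ 2 = ∑' i, (inner ℝ (φ i) g : ℝ) ^ 2 := by
  set θ : ℕ → ℝ := fun i => (inner ℝ (φ i) g : ℝ) with hθ
  have hsum := sq_summable hφ g
  apply le_antisymm
  · apply le_of_forall_pos_le_add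
    intro ε hε
    obtain ⟨s, d, hsd⟩ := exists_partial_sq hφ hsp g ε hε
    have h1 := sub_partial_ge hφ g s d
    have h2 : ∑ i ∈ s, θ i ^ 2 ≤ ∑' i, θ i ^ 2 :=
      Summable.sum_le_tsum s (fun i _ => sq_nonneg _) hsum
    linarith
  · have h := hφ.tsum_inner_products_le g (𝕜 := ℝ)
    have heq : ∀ i, ‖(inner ℝ (φ i) g : ℝ)‖ ^ 2 = θ i ^ 2 := by
      intro i; rw [Real.norm_eq_abs, sq_abs]
    simp_rw [heq] at h
    exact h

lemma summable_ite_le {f : ℕ → ℝ} (hf : Summable f) (hf0 : ∀ i, 0 ≤ f i) (P : ℕ → Prop)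
    [DecidablePred P] : Summable (fun i => if P i then f i else 0) := by
  refine Summable.of_nonneg_of_le (fun i => ?_) (fun i => ?_) hf
  · split
    · exact hf0 i
    · exact le_rfl
  · split
    · exact le_rfl
    · exact hf0 i

lemma norm_sub_partial_sq (hφ : Orthonormal ℝ φ)
    (hsp : (Submodule.span ℝ (Set.range φ)).topologicalClosure = ⊤)
    (g : H) (s : Finset ℕ) :
    ‖g - ∑ j ∈ s, (inner ℝ (φ j) g : ℝ) • φ j‖ ^ 2
      = ∑' i, (if i ∈ s then 0 else (inner ℝ (φ i) g : ℝ) ^ 2) := by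
  set θ : ℕ → ℝ := fun i => (inner ℝ (φ i) g : ℝ) with hθ
  have hsum := sq_summable hφ g
  have hs1 : Summable (fun i => if i ∈ s then (0:ℝ) else θ i ^ 2) := by
    apply Summable.of_nonneg_of_le (fun i => by positivity) (fun i => ?_) hsum
    split
    · exact sq_nonneg _
    · exact le_refl _
  -- ‖g - P_s g‖² = ‖g‖² - ∑_s θ² by sub_partial_ge with equality
  have hexp : ‖g - ∑ j ∈ s, θ j • φ j‖ ^ 2 = ‖g‖ ^ 2 - ∑ i ∈ s, θ i ^ 2 := by
    rw [@norm_sub_sq_real, norm_partial_sq hφ]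
    have : (inner ℝ g (∑ j ∈ s, θ j • φ j) : ℝ) = ∑ i ∈ s, θ i ^ 2 := by
      rw [inner_sum]
      apply Finset.sum_congr rfl
      intro i hi
      rw [real_inner_smul_right, real_inner_comm, sq]
    rw [this]
    ring
  rw [hexp, parseval hφ hsp g]
  have hsplit : ∑' i, θ i ^ 2
      = ∑ i ∈ s, θ i ^ 2 + ∑' i, (if i ∈ s then 0 else θ i ^ 2) := by
    have h1 : ∀ i, θ i ^ 2 = (if i ∈ s then θ i ^ 2 else 0) + (if i ∈ s then 0 else θ i ^ 2) := by
      intro i; split <;> simp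
    have hs2 : Summable (fun i => if i ∈ s then θ i ^ 2 else 0) := by
      apply Summable.of_nonneg_of_le (fun i => by positivity) (fun i => ?_) hsum
      split
      · exact le_refl _
      · exact sq_nonneg _
    calc ∑' i, θ i ^ 2
        = ∑' i, ((if i ∈ s then θ i ^ 2 else 0) + (if i ∈ s then 0 else θ i ^ 2)) := by
          apply tsum_congr; intro i; exact h1 i
      _ = (∑' i, (if i ∈ s then θ i ^ 2 else 0)) + ∑' i, (if i ∈ s then 0 else θ i ^ 2) :=
          Summable.tsum_add hs2 hs1
      _ = ∑ i ∈ s, θ i ^ 2 + ∑' i, (if i ∈ s then 0 else θ i ^ 2) := by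
          congr 1
          rw [tsum_eq_sum (s := s) (f := fun i => if i ∈ s then θ i ^ 2 else 0)
            (fun b hb => if_neg hb)]
          exact Finset.sum_congr rfl (fun i hi => if_pos hi)
  rw [hsplit]
  ring

lemma besov_tail {g : H} {R rr : ℝ} (hB : inBesov φ rr R g) (J : ℕ) :
    (∑' j, if J ≤ j then (inner ℝ (φ j) g : ℝ) ^ 2 else 0)
      ≤ R ^ 2 * ((J:ℝ) + 1) ^ (-(2*rr)) := by
  have h := hB J
  have hp : (0:ℝ) < ((J:ℝ)+1) ^ (2*rr) := Real.rpow_pos_of_pos (by positivity) _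
  rw [Real.rpow_neg (by positivity), ← div_eq_mul_inv, le_div_iff₀ hp]
  nlinarith [h]


lemma myle_of_sq_le_sq {a b : ℝ} (ha : 0 ≤ a) (hb : 0 ≤ b) (h : a^2 ≤ b^2) : a ≤ b := by
  nlinarith

lemma count_of_wlq {g : H} {q R : ℝ} (hq0 : 0 < q) (hR : 0 < R) (hw : inwlq φ q R g) :
    ∀ t : ℝ, 0 < t → ∀ s : Finset ℕ, (∀ j ∈ s, t < |(inner ℝ (φ j) g : ℝ)|) →
      (s.card : ℝ) ≤ R ^ q * t ^ (-q) := by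
  intro t ht s hs
  obtain ⟨hfin, hcard⟩ := hw t ht
  have hsub : ↑s ⊆ {j : ℕ | t < |(inner ℝ (φ j) g : ℝ)|} := fun j hj => hs j hj
  have h1 : (s.card : ℝ) ≤ ({j : ℕ | t < |(inner ℝ (φ j) g : ℝ)|}.ncard : ℝ) := by
    have := Set.ncard_le_ncard hsub hfin
    rw [Set.ncard_coe_finset] at this
    exact_mod_cast this
  have htq : 0 < t ^ q := Real.rpow_pos_of_pos ht q
  calc (s.card : ℝ) ≤ ({j : ℕ | t < |(inner ℝ (φ j) g : ℝ)|}.ncard : ℝ) := h1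
    _ ≤ R ^ q / t ^ q := by rw [le_div_iff₀ htq]; linarith [hcard]
    _ = R ^ q * t ^ (-q) := by rw [Real.rpow_neg ht.le, div_eq_mul_inv]

lemma memL1r_partial_mem (hφ : Orthonormal ℝ φ)
    {g : H} {R rr : ℝ} (hR : 0 < R) (hrr : 0 < rr)
    (hB : inBesov φ rr R g) (s : Finset ℕ) :
    (max (∑ j ∈ s, |(inner ℝ (φ j) g : ℝ)|) R) ∈
      {C : ℝ | 0 < C ∧ ∀ p : ℕ, 1 ≤ p →
        ∃ gp ∈ L1set φ p, l1norm φ p gp ≤ C ∧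
          ‖(∑ j ∈ s, (inner ℝ (φ j) g : ℝ) • φ j) - gp‖ ≤ C * (p : ℝ) ^ (-rr)} := by
  set θ : ℕ → ℝ := fun j => (inner ℝ (φ j) g : ℝ) with hθ
  set Ch : ℝ := max (∑ j ∈ s, |θ j|) R with hCh
  have hsum := sq_summable hφ g
  refine ⟨lt_of_lt_of_le hR (le_max_right _ _), fun p hp => ?_⟩
  have hp0 : (0:ℝ) < (p:ℝ) := by exact_mod_cast hp
  set gp : H := ∑ j ∈ s.filter (fun j => j < p), θ j • φ j with hgp
  have hfilter : (Finset.range p).filter (fun j => j ∈ s) = s.filter (fun j => j < p) := by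
    ext j
    simp only [Finset.mem_filter, Finset.mem_range]
    exact and_comm
  have hrep : gp = ∑ j : Fin p, (if (j:ℕ) ∈ s then θ (j:ℕ) else 0) • φ (j:ℕ) := by
    rw [Fin.sum_univ_eq_sum_range (fun j => (if j ∈ s then θ j else 0) • φ j) p]
    simp only [ite_smul, zero_smul]
    rw [← Finset.sum_filter, hfilter, hgp]
  refine ⟨gp, ⟨_, hrep⟩, ?_, ?_⟩
  · -- l1norm bound
    have h1 : l1norm φ p gp ≤ ∑ j : Fin p, |if (j:ℕ) ∈ s then θ (j:ℕ) else 0| := by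
      rw [hrep]; exact l1norm_le φ p _
    have h2 : ∑ j : Fin p, |if (j:ℕ) ∈ s then θ (j:ℕ) else 0|
        = ∑ j ∈ (Finset.range p).filter (fun j => j ∈ s), |θ j| := by
      rw [Fin.sum_univ_eq_sum_range (fun j => |if j ∈ s then θ j else 0|) p]
      rw [Finset.sum_filter]
      apply Finset.sum_congr rfl
      intro j _
      rw [apply_ite abs, abs_zero]
    have h3 : ∑ j ∈ (Finset.range p).filter (fun j => j ∈ s), |θ j| ≤ ∑ j ∈ s, |θ j| := by
      apply Finset.sum_le_sum_of_subset_of_nonneg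
      · intro j hj
        exact (Finset.mem_filter.mp hj).2
      · intro j _ _
        exact abs_nonneg _
    calc l1norm φ p gp ≤ _ := h1
      _ = _ := h2
      _ ≤ ∑ j ∈ s, |θ j| := h3
      _ ≤ Ch := le_max_left _ _
  · -- approximation error
    have hdiff : (∑ j ∈ s, θ j • φ j) - gp
        = ∑ j ∈ s.filter (fun j => ¬ j < p), θ j • φ j := by
      rw [hgp, ← Finset.sum_filter_add_sum_filter_not s (fun j => j < p) (fun j => θ j • φ j)]
      abel
    have hnsq : ‖(∑ j ∈ s, θ j • φ j) - gp‖ ^ 2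
        = ∑ j ∈ s.filter (fun j => ¬ j < p), θ j ^ 2 := by
      rw [hdiff, norm_partial_sq hφ]
    have h1 : ∑ j ∈ s.filter (fun j => ¬ j < p), θ j ^ 2
        ≤ ∑' j, (if p ≤ j then θ j ^ 2 else 0) := by
      have hcongr : ∀ j ∈ s.filter (fun j => ¬ j < p), θ j ^ 2 = if p ≤ j then θ j ^ 2 else 0 := by
        intro j hj
        rw [if_pos (not_lt.mp (Finset.mem_filter.mp hj).2)]
      rw [Finset.sum_congr rfl hcongr]
      apply Summable.sum_le_tsum
      · intro j _
        split
        · exact sq_nonneg _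
        · exact le_rfl
      · exact summable_ite_le hsum (fun i => sq_nonneg _) _
    have h2 : (∑' j, if p ≤ j then θ j ^ 2 else 0) ≤ R^2 * ((p:ℝ)+1) ^ (-(2*rr)) :=
      besov_tail hB p
    have h3 : ((p:ℝ)+1) ^ (-(2*rr)) ≤ (p:ℝ) ^ (-(2*rr)) :=
      Real.rpow_le_rpow_of_nonpos hp0 (by linarith) (by linarith)
    have h4 : (p:ℝ) ^ (-(2*rr)) = ((p:ℝ) ^ (-rr))^2 := by
      rw [← Real.rpow_natCast ((p:ℝ) ^ (-rr)) 2, ← Real.rpow_mul (le_of_lt hp0)]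
      congr 1
      push_cast
      ring
    apply myle_of_sq_le_sq (norm_nonneg _) (by positivity)
    have hRC : R ≤ Ch := le_max_right _ _
    have hrp : (0:ℝ) ≤ (p:ℝ) ^ (-rr) := Real.rpow_nonneg hp0.le _
    calc ‖(∑ j ∈ s, θ j • φ j) - gp‖ ^ 2
        = ∑ j ∈ s.filter (fun j => ¬ j < p), θ j ^ 2 := hnsq
      _ ≤ R^2 * ((p:ℝ)+1) ^ (-(2*rr)) := le_trans h1 h2
      _ ≤ R^2 * ((p:ℝ) ^ (-rr))^2 := by
          rw [← h4]
          exact mul_le_mul_of_nonneg_left h3 (by positivity)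
      _ ≤ Ch^2 * ((p:ℝ) ^ (-rr))^2 := by
          have : R^2 ≤ Ch^2 := by nlinarith
          exact mul_le_mul_of_nonneg_right this (by positivity)
      _ = (Ch * (p:ℝ) ^ (-rr))^2 := by ring


end Main

set_option maxHeartbeats 1000000 in
/-- In the orthonormal case, `wℓ_q(R) ∩ B^r_{2,∞}(R) ⊆ B_{q,r}(C_{q,r} R)`; in
particular, since `L_q(R) ⊆ wℓ_q(R)`, also `L_q(R) ∩ B^r_{2,∞}(R) ⊆ B_{q,r}(C_{q,r} R)`. -/
theorem statement_12 :
    ∀ q r : ℝ, 1 < q → q < 2 → 0 < r →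
    ∃ C : ℝ, 0 < C ∧
      ∀ R : ℝ, 0 < R →
      ∀ (H : Type) [NormedAddCommGroup H] [InnerProductSpace ℝ H]
        (φ : ℕ → H), Orthonormal ℝ φ →
        (Submodule.span ℝ (Set.range φ)).topologicalClosure = ⊤ →
        (∀ g : H, inwlq φ q R g → inBesov φ r R g → memBqr φ q r (C * R) g) ∧
        (∀ g : H, inLq φ q R g → inwlq φ q R g) ∧
        (∀ g : H, inLq φ q R g → inBesov φ r R g → memBqr φ q r (C * R) g) := by
  intro q r hq1 hq2 hr
  have hq0 : (0:ℝ) < q := by linarith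
  have hx1 : (2:ℝ)^(1-q) < 1 := Real.rpow_lt_one_of_one_lt_of_neg (by norm_num) (by linarith)
  have hx2 : (2:ℝ)^(q-2) < 1 := Real.rpow_lt_one_of_one_lt_of_neg (by norm_num) (by linarith)
  set K1 : ℝ := (2:ℝ)^(q+1) * (1 - (2:ℝ)^(1-q))⁻¹ with hK1
  set K2 : ℝ := (2:ℝ)^q * (1 - (2:ℝ)^(q-2))⁻¹ with hK2
  have hK1pos : 0 < K1 :=
    mul_pos (Real.rpow_pos_of_pos two_pos _) (inv_pos.mpr (by linarith))
  have hK2pos : 0 < K2 :=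
    mul_pos (Real.rpow_pos_of_pos two_pos _) (inv_pos.mpr (by linarith))
  set C : ℝ := Real.sqrt (K2 + 1) + K1 + 1 with hC
  have hsqnn : 0 ≤ Real.sqrt (K2+1) := Real.sqrt_nonneg _
  have hC1 : 1 ≤ C := by rw [hC]; linarith
  have hCpos : 0 < C := by linarith
  refine ⟨C, hCpos, ?_⟩
  intro R hR Hs _ _ φ hφ hsp
  have part2 : ∀ g : Hs, inLq φ q R g → inwlq φ q R g := by
    intro g hLq η hη
    have hfin : {j : ℕ | η < |(inner ℝ (φ j) g : ℝ)|}.Finite := by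
      apply Set.Finite.subset ?_ (s := {j : ℕ | ¬ (|(inner ℝ (φ j) g : ℝ)| ^ q < η ^ q)})
      · intro j hj
        simp only [Set.mem_setOf_eq, not_lt] at hj ⊢
        exact Real.rpow_le_rpow hη.le hj.le hq0.le
      · have hev : ∀ᶠ j in Filter.cofinite, |(inner ℝ (φ j) g : ℝ)| ^ q < η ^ q :=
          (hLq.1.tendsto_cofinite_zero).eventually_lt_const (Real.rpow_pos_of_pos hη q)
        exact Filter.eventually_cofinite.mp hev
    refine ⟨hfin, ?_⟩
    have hcard : η ^ q * ({j : ℕ | η < |(inner ℝ (φ j) g : ℝ)|}.ncard : ℝ)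
        ≤ ∑ j ∈ hfin.toFinset, |(inner ℝ (φ j) g : ℝ)| ^ q := by
      rw [Set.ncard_eq_toFinset_card _ hfin, mul_comm]
      have h0 : ((hfin.toFinset.card : ℕ) : ℝ) * η ^ q = ∑ _j ∈ hfin.toFinset, η ^ q := by
        rw [Finset.sum_const, nsmul_eq_mul]
      rw [h0]
      apply Finset.sum_le_sum
      intro j hj
      exact Real.rpow_le_rpow hη.le (hfin.mem_toFinset.mp hj).le hq0.le
    calc η ^ q * ({j : ℕ | η < |(inner ℝ (φ j) g : ℝ)|}.ncard : ℝ)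
        ≤ ∑ j ∈ hfin.toFinset, |(inner ℝ (φ j) g : ℝ)| ^ q := hcard
      _ ≤ ∑' j, |(inner ℝ (φ j) g : ℝ)| ^ q :=
          Summable.sum_le_tsum _ (fun j _ => Real.rpow_nonneg (abs_nonneg _) q) hLq.1
      _ ≤ R ^ q := hLq.2
  have main : ∀ g : Hs, inwlq φ q R g → inBesov φ r R g → memBqr φ q r (C * R) g := by
    intro g hw hB δ hδ
    set θ : ℕ → ℝ := fun j => (inner ℝ (φ j) g : ℝ) with hθ
    have hsum : Summable (fun i => θ i ^ 2) := sq_summable hφ g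
    have hcount := count_of_wlq hq0 hR hw
    have hgR2 : ∑' j, θ j ^ 2 ≤ R ^ 2 := by
      have h0 := hB 0
      simpa [Real.one_rpow] using h0
    have hθR : ∀ j, |θ j| ≤ R := by
      intro j
      have h1 : θ j ^ 2 ≤ ∑' i, θ i ^ 2 := Summable.le_tsum hsum j (fun i _ => sq_nonneg _)
      apply myle_of_sq_le_sq (abs_nonneg _) hR.le
      rw [sq_abs]
      linarith
    have hgnorm : ‖g‖ ≤ R := by
      apply myle_of_sq_le_sq (norm_nonneg _) hR.le
      rw [parseval hφ hsp g]
      linarith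
    have hbdd : BddBelow (Set.range fun h : {h : Hs // memL1r φ r h} =>
        ‖g - (h : Hs)‖ + δ * l1rnorm φ r (h : Hs)) := by
      refine ⟨0, ?_⟩
      rintro x ⟨h, rfl⟩
      exact add_nonneg (norm_nonneg _) (mul_nonneg hδ.le (l1rnorm_nonneg φ r _))
    set e : ℝ := 2 * (1/q - 1/2) with he
    have he' : e = 2/q - 1 := by rw [he]; ring
    have h2q : 1 < 2/q := by rw [lt_div_iff₀ hq0]; linarith
    have h2q' : 2/q ≤ 2 := by rw [div_le_iff₀ hq0]; nlinarith
    have hepos : 0 < e := by rw [he']; linarith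
    have hele : e ≤ 1 := by rw [he']; linarith
    rcases le_or_gt 1 δ with hδ1 | hδ1
    · -- large δ : use h = 0
      apply ciInf_le_of_le hbdd ⟨0, memL1r_zero φ r⟩
      have h1 : (1:ℝ) ≤ δ ^ e := by
        calc (1:ℝ) = δ ^ (0:ℝ) := (Real.rpow_zero δ).symm
          _ ≤ δ ^ e := Real.rpow_le_rpow_of_exponent_le hδ1 hepos.le
      have h2 : ‖g - (0:Hs)‖ + δ * l1rnorm φ r (0:Hs) = ‖g‖ := by
        rw [l1rnorm_zero, mul_zero, add_zero, sub_zero]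
      rw [h2]
      calc ‖g‖ ≤ R := hgnorm
        _ ≤ C * R * δ ^ e := by
            nlinarith [mul_nonneg (sub_nonneg.mpr hC1) hR.le,
              mul_nonneg (mul_nonneg hCpos.le hR.le) (sub_nonneg.mpr h1)]
    · -- small δ
      set η : ℝ := R * δ ^ (2/q) with hη
      have hηpos : 0 < η := mul_pos hR (Real.rpow_pos_of_pos hδ _)
      set p : ℕ := ⌈δ ^ (-(e/r))⌉₊ with hp
      set s : Finset ℕ := (Finset.range p).filter (fun j => η < |θ j|) with hs
      have hmem := memL1r_partial_mem hφ hR hr hB s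
      set Ch : ℝ := max (∑ j ∈ s, |θ j|) R with hCh
      have hmemL1r : memL1r φ r (∑ j ∈ s, θ j • φ j) := ⟨Ch, hmem⟩
      have hl1r : l1rnorm φ r (∑ j ∈ s, θ j • φ j) ≤ Ch :=
        csInf_le ⟨0, fun x hx => hx.1.le⟩ hmem
      apply ciInf_le_of_le hbdd ⟨∑ j ∈ s, θ j • φ j, hmemL1r⟩
      -- ℓ¹ bound
      have hl1 : ∑ j ∈ s, |θ j| ≤ K1 * (R ^ q * η ^ (1-q)) :=
        dyadic_sum_le hq1 hR hηpos hθR hcount s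
          (fun j hj => (Finset.mem_filter.mp hj).2)
      have hstep1 : η ^ (1-q) = R^(1-q) * δ^((2/q)*(1-q)) := by
        rw [hη, Real.mul_rpow hR.le (Real.rpow_nonneg hδ.le _),
          ← Real.rpow_mul hδ.le]
      have hRq1 : R^q * R^(1-q) = R := by
        rw [← Real.rpow_add hR]; norm_num
      have hexp1 : (2/q)*(1-q) = e - 1 := by
        rw [he']; field_simp; ring
      have hl1' : ∑ j ∈ s, |θ j| ≤ K1 * (R * δ^(e-1)) := by
        have heq : R^q * η^(1-q) = R * δ^(e-1) := by
          rw [hstep1, ← mul_assoc, hRq1, hexp1]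
        rwa [heq] at hl1
      have hdd : δ * δ^(e-1) = δ^e := by
        have h1 : δ^(1:ℝ) * δ^(e-1) = δ^(1 + (e-1)) := (Real.rpow_add hδ 1 (e-1)).symm
        rw [Real.rpow_one] at h1
        rw [h1]
        norm_num
      have hδe : δ ≤ δ^e := by
        calc δ = δ^(1:ℝ) := (Real.rpow_one δ).symm
          _ ≤ δ^e := Real.rpow_le_rpow_of_exponent_ge hδ hδ1.le hele
      have hδepos : 0 < δ^e := Real.rpow_pos_of_pos hδ _
      have hδCh : δ * Ch ≤ (K1 + 1) * (R * δ^e) := by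
        have hCh_le : Ch ≤ K1 * (R * δ^(e-1)) + R := by
          rw [hCh]
          apply max_le
          · have : (0:ℝ) < R := hR
            linarith
          · have h0 : 0 ≤ K1 * (R * δ^(e-1)) := by positivity
            linarith
        calc δ * Ch ≤ δ * (K1 * (R * δ^(e-1)) + R) :=
              mul_le_mul_of_nonneg_left hCh_le hδ.le
          _ = K1 * R * (δ * δ^(e-1)) + R * δ := by ring
          _ = K1 * R * δ^e + R * δ := by rw [hdd]
          _ ≤ K1 * R * δ^e + R * δ^e := by nlinarith
          _ = (K1+1) * (R * δ^e) := by ring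
      -- norm bound
      have hT2pre : (p:ℝ) + 1 ≥ δ ^ (-(e/r)) := by
        have := Nat.le_ceil (δ ^ (-(e/r)))
        rw [hp]
        push_cast
        linarith [this]
      have hXpos : 0 < δ ^ (-(e/r)) := Real.rpow_pos_of_pos hδ _
      have hT2exp : (δ ^ (-(e/r))) ^ (-(2*r)) = (δ^e)^2 := by
        rw [← Real.rpow_mul hδ.le]
        have : (-(e/r)) * (-(2*r)) = e * 2 := by field_simp
        rw [this, Real.rpow_mul hδ.le, Real.rpow_two]
      have hT2 : (∑' i, if p ≤ i then θ i ^ 2 else 0) ≤ R^2 * (δ^e)^2 := by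
        calc (∑' i, if p ≤ i then θ i ^ 2 else 0)
            ≤ R^2 * ((p:ℝ)+1) ^ (-(2*r)) := besov_tail hB p
          _ ≤ R^2 * (δ ^ (-(e/r))) ^ (-(2*r)) := by
              apply mul_le_mul_of_nonneg_left _ (by positivity)
              exact Real.rpow_le_rpow_of_nonpos hXpos hT2pre (by linarith)
          _ = R^2 * (δ^e)^2 := by rw [hT2exp]
      have hstep2 : η ^ (2-q) = R^(2-q) * δ^((2/q)*(2-q)) := by
        rw [hη, Real.mul_rpow hR.le (Real.rpow_nonneg hδ.le _),
          ← Real.rpow_mul hδ.le]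
      have hRq2 : R^q * R^(2-q) = R^2 := by
        rw [← Real.rpow_add hR, show q + (2-q) = ((2:ℕ):ℝ) by push_cast; ring,
          Real.rpow_natCast]
      have hexp2 : (2/q)*(2-q) = e * 2 := by
        rw [he']; field_simp
      have hRqeta : R^q * η^(2-q) = R^2 * (δ^e)^2 := by
        rw [hstep2, ← mul_assoc, hRq2, hexp2, Real.rpow_mul hδ.le, Real.rpow_two]
      have hS1 : Summable (fun i => if |θ i| ≤ η then θ i ^ 2 else 0) :=
        summable_ite_le hsum (fun i => sq_nonneg _) _
      have hS2 : Summable (fun i => if p ≤ i then θ i ^ 2 else 0) :=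
        summable_ite_le hsum (fun i => sq_nonneg _) _
      have hS0 : Summable (fun i => if i ∈ s then (0:ℝ) else θ i ^ 2) := by
        apply Summable.of_nonneg_of_le (fun i => ?_) (fun i => ?_) hsum
        · split
          · exact le_rfl
          · exact sq_nonneg _
        · split
          · exact sq_nonneg _
          · exact le_rfl
      have hT1 : (∑' i, if |θ i| ≤ η then θ i ^ 2 else 0) ≤ K2 * (R^q * η^(2-q)) := by
        apply Summable.tsum_le_of_sum_le hS1
        intro t
        have hfil : ∑ i ∈ t, (if |θ i| ≤ η then θ i ^ 2 else 0)
            = ∑ i ∈ t.filter (fun i => 0 < |θ i| ∧ |θ i| ≤ η), (if |θ i| ≤ η then θ i ^ 2 else 0) := by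
          symm
          apply Finset.sum_filter_of_ne
          intro i _ hne
          by_cases hle : |θ i| ≤ η
          · refine ⟨?_, hle⟩
            rw [if_pos hle] at hne
            have : θ i ≠ 0 := fun hz => hne (by rw [hz]; ring)
            exact abs_pos.mpr this
          · exact absurd (if_neg hle) hne
        rw [hfil]
        have hfil2 : ∑ i ∈ t.filter (fun i => 0 < |θ i| ∧ |θ i| ≤ η),
            (if |θ i| ≤ η then θ i ^ 2 else 0)
            = ∑ i ∈ t.filter (fun i => 0 < |θ i| ∧ |θ i| ≤ η), |θ i| ^ 2 := by
          apply Finset.sum_congr rfl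
          intro i hi
          rw [if_pos (Finset.mem_filter.mp hi).2.2, sq_abs]
        rw [hfil2]
        calc ∑ i ∈ t.filter (fun i => 0 < |θ i| ∧ |θ i| ≤ η), |θ i| ^ 2
            ≤ (2:ℝ)^q * (1 - (2:ℝ)^(q-2))⁻¹ * (R^q * η^(2-q)) :=
              dyadic_sq_le hq2 hq0 hR hηpos hcount _
                (fun j hj => (Finset.mem_filter.mp hj).2)
          _ = K2 * (R^q * η^(2-q)) := by rw [hK2]
      have hptw : ∀ i, (if i ∈ s then (0:ℝ) else θ i ^ 2)
          ≤ (if |θ i| ≤ η then θ i ^ 2 else 0) + (if p ≤ i then θ i ^ 2 else 0) := by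
        intro i
        have hnn1 : (0:ℝ) ≤ if |θ i| ≤ η then θ i ^ 2 else 0 := by
          split
          · exact sq_nonneg _
          · exact le_rfl
        have hnn2 : (0:ℝ) ≤ if p ≤ i then θ i ^ 2 else 0 := by
          split
          · exact sq_nonneg _
          · exact le_rfl
        by_cases h1 : i ∈ s
        · rw [if_pos h1]
          exact add_nonneg hnn1 hnn2
        · rw [if_neg h1]
          by_cases h2 : p ≤ i
          · rw [if_pos h2]
            linarith
          · push_neg at h2
            have h3 : ¬ η < |θ i| := fun hcon =>
              h1 (Finset.mem_filter.mpr ⟨Finset.mem_range.mpr h2, hcon⟩)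
            rw [if_pos (not_lt.mp h3)]
            linarith
      have hnormsq : ‖g - ∑ j ∈ s, θ j • φ j‖ ^ 2 ≤ (K2+1) * (R^2 * (δ^e)^2) := by
        rw [norm_sub_partial_sq hφ hsp g s]
        calc (∑' i, if i ∈ s then (0:ℝ) else θ i ^ 2)
            ≤ ∑' i, ((if |θ i| ≤ η then θ i ^ 2 else 0) + (if p ≤ i then θ i ^ 2 else 0)) :=
              Summable.tsum_le_tsum hptw hS0 (hS1.add hS2)
          _ = (∑' i, if |θ i| ≤ η then θ i ^ 2 else 0)
              + ∑' i, (if p ≤ i then θ i ^ 2 else 0) := Summable.tsum_add hS1 hS2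
          _ ≤ K2 * (R^q * η^(2-q)) + R^2 * (δ^e)^2 := add_le_add hT1 hT2
          _ = (K2+1) * (R^2 * (δ^e)^2) := by rw [hRqeta]; ring
      have hnorm : ‖g - ∑ j ∈ s, θ j • φ j‖ ≤ Real.sqrt (K2+1) * (R * δ^e) := by
        apply myle_of_sq_le_sq (norm_nonneg _) (by positivity)
        have hrw : (Real.sqrt (K2+1) * (R * δ^e))^2 = (K2+1) * (R^2 * (δ^e)^2) := by
          rw [mul_pow, mul_pow, Real.sq_sqrt (by linarith : (0:ℝ) ≤ K2+1)]
        rw [hrw]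
        exact hnormsq
      calc ‖g - ∑ j ∈ s, θ j • φ j‖ + δ * l1rnorm φ r (∑ j ∈ s, θ j • φ j)
          ≤ Real.sqrt (K2+1) * (R * δ^e) + (K1+1) * (R * δ^e) := by
            apply add_le_add hnorm
            calc δ * l1rnorm φ r (∑ j ∈ s, θ j • φ j) ≤ δ * Ch :=
                  mul_le_mul_of_nonneg_left hl1r hδ.le
              _ ≤ (K1+1) * (R * δ^e) := hδCh
        _ = C * R * δ^e := by rw [hC]; ring
  exact ⟨main, part2, fun g hLq hB => main g (part2 g hLq) hB⟩
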